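/- Let σ = σ₁⋯σ_n be a word of length n and r a natural number not occurring in σ. If i (with 0 ≤ i ≤ n) is an LR-space of σ relative to r, then des(σ^{(i)}(r)) = des(σ) + 1. -/

import Mathlib

open Polynomial List

/-- The set of (1-indexed) descents of a word `w`: indices `i` with
`1 ≤ i ≤ length w - 1` and `w_i > w_{i+1}`. -/
def descents (w : List ℕ) : Finset ℕ :=
  (Finset.Ico 1 w.length).filter (fun i => w.getD i 0 < w.getD (i - 1) 0)

/-- The number of descents of a word. -/
def des (w : List ℕ) : ℕ := (descents w).card

/-- The major index of a word: the sum of its descents. -/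
def maj (w : List ℕ) : ℕ := ∑ i ∈ descents w, i

/-- `dge i w` is the number of descents of `w` that are `≥ i`. -/
def dge (i : ℕ) (w : List ℕ) : ℕ := ((descents w).filter (fun j => i ≤ j)).card

/-- `α` is a shuffle of the disjoint words `σ` and `π`. -/
def IsShuffle (σ π α : List ℕ) : Prop :=
  α.length = σ.length + π.length ∧ σ.Sublist α ∧ π.Sublist α

/-- `ins σ i r` is `σ^{(i)}(r)`, the word obtained by inserting `r`
immediately before `σ_{i+1}` (after `σ_n` when `i = n`). -/
def ins (σ : List ℕ) (i r : ℕ) : List ℕ := σ.insertIdx i r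

/-- The major increment `im(σ,i,r) = maj(σ^{(i)}(r)) - maj(σ)`. -/
def im (σ : List ℕ) (i r : ℕ) : ℤ := (maj (ins σ i r) : ℤ) - (maj σ : ℤ)

/-- The space `i` (for `0 ≤ i ≤ n`) is an RL-space of `σ` relative to `r`. -/
def IsRL (σ : List ℕ) (r i : ℕ) : Prop :=
  (i = σ.length ∧ ∀ x ∈ σ.getLast?, x < r) ∨
  (i = 0 ∧ ∀ x ∈ σ.head?, r < x) ∨
  (0 < i ∧ i < σ.length ∧ r < σ.getD i 0 ∧ σ.getD i 0 < σ.getD (i - 1) 0) ∨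
  (0 < i ∧ i < σ.length ∧ σ.getD i 0 < σ.getD (i - 1) 0 ∧ σ.getD (i - 1) 0 < r) ∨
  (0 < i ∧ i < σ.length ∧ σ.getD (i - 1) 0 < r ∧ r < σ.getD i 0)

/-- The Gaussian binomial coefficient `[N choose M]_q`, as a polynomial in `q`:
`∏_{j=1}^{M} (1 - q^{N-M+j}) / ∏_{j=1}^{M} (1 - q^{j})` when `0 ≤ M ≤ N`, and `0` otherwise. -/
noncomputable def gauss (N M : ℤ) : Polynomial ℚ :=
  if 0 ≤ M ∧ M ≤ N then
    (∏ j ∈ Finset.Icc 1 M.toNat, (1 - (X : Polynomial ℚ) ^ (N - M + j).toNat)) /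
      (∏ j ∈ Finset.Icc 1 M.toNat, (1 - (X : Polynomial ℚ) ^ (j : ℕ)))
  else 0

/-- `delPrefix α π i` is `α^{(i)}`: the word obtained from `α` by deleting
the letters `π₁, …, π_i`. -/
def delPrefix (α π : List ℕ) (i : ℕ) : List ℕ :=
  α.filter (fun x => !((π.take i).contains x))

def desAux : List ℕ → ℕ
  | a :: b :: t => (if b < a then 1 else 0) + desAux (b :: t)
  | _ => 0

lemma des_cons_cons (a b : ℕ) (t : List ℕ) :
    des (a :: b :: t) = (if b < a then 1 else 0) + des (b :: t) := by
  classical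
  unfold des descents
  have h2 : ∀ j, 1 ≤ j →
      (((a :: b :: t).getD (j + 1) 0 < (a :: b :: t).getD (j + 1 - 1) 0) ↔
      ((b :: t).getD j 0 < (b :: t).getD (j - 1) 0)) := by
    intro j hj
    obtain ⟨j, rfl⟩ := Nat.exists_eq_add_of_le hj
    simp [List.getD, Nat.add_comm 1 j]
  have h1 : Finset.Ico 1 (a :: b :: t).length
      = insert 1 ((Finset.Ico 1 (b :: t).length).image (· + 1)) := by
    simp only [List.length_cons]
    rw [Finset.image_add_right_Ico, ← Finset.insert_Ico_add_one_left_eq_Ico (by omega)]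
  rw [h1, Finset.filter_insert]
  have himg : (((Finset.Ico 1 (b :: t).length).image (· + 1)).filter
        (fun i => (a :: b :: t).getD i 0 < (a :: b :: t).getD (i - 1) 0))
      = ((Finset.Ico 1 (b :: t).length).filter
        (fun i => (b :: t).getD i 0 < (b :: t).getD (i - 1) 0)).image (· + 1) := by
    ext k
    simp only [Finset.mem_filter, Finset.mem_image, Finset.mem_Ico]
    constructor
    · rintro ⟨⟨j, hj, rfl⟩, hP⟩
      exact ⟨j, ⟨hj, (h2 j hj.1).1 hP⟩, rfl⟩
    · rintro ⟨j, ⟨hj, hQ⟩, rfl⟩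
      exact ⟨⟨j, hj, rfl⟩, (h2 j hj.1).2 hQ⟩
  rw [himg]
  have hnm : 1 ∉ ((Finset.Ico 1 (b :: t).length).filter
        (fun i => (b :: t).getD i 0 < (b :: t).getD (i - 1) 0)).image (· + 1) := by
    simp only [Finset.mem_image, not_exists]
    rintro x ⟨hx, h⟩
    have := (Finset.mem_filter.1 hx).1
    simp only [Finset.mem_Ico] at this
    omega
  have hcard := Finset.card_image_of_injective
    ((Finset.Ico 1 (b :: t).length).filter
        (fun i => (b :: t).getD i 0 < (b :: t).getD (i - 1) 0)) (add_left_injective 1)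
  have hcond : ((a :: b :: t).getD 1 0 < (a :: b :: t).getD (1 - 1) 0) ↔ b < a := by
    simp [List.getD]
  rw [if_congr hcond rfl rfl]
  split_ifs with h
  · rw [Finset.card_insert_of_notMem hnm, hcard]; omega
  · rw [hcard]; omega

lemma des_eq_desAux : ∀ w : List ℕ, des w = desAux w
  | [] => by simp [des, descents, desAux]
  | [a] => by simp [des, descents, desAux]
  | a :: b :: t => by
    rw [des_cons_cons, des_eq_desAux (b :: t)]; rfl

def bdry : Option ℕ → Option ℕ → ℕ
  | some a, some b => if b < a then 1 else 0
  | _, _ => 0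

lemma desAux_cons (a : ℕ) (l : List ℕ) :
    desAux (a :: l) = bdry (some a) l.head? + desAux l := by
  cases l <;> simp [desAux, bdry]

lemma desAux_append : ∀ (u v : List ℕ),
    desAux (u ++ v) = desAux u + desAux v + bdry u.getLast? v.head?
  | [], v => by simp [desAux, bdry]
  | a :: u', v => by
    rw [List.cons_append, desAux_cons, desAux_append u' v]
    cases u' with
    | nil => simp [desAux, bdry]; cases v <;> simp [bdry] <;> omega
    | cons c t =>
      rw [List.getLast?_cons_cons]
      have h1 : desAux (a :: c :: t) = bdry (some a) (some c) + desAux (c :: t) :=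
        desAux_cons _ _
      simp only [List.cons_append, List.head?_cons]
      omega

lemma insertIdx_eq (r : ℕ) : ∀ (i : ℕ) (σ : List ℕ), i ≤ σ.length →
    σ.insertIdx i r = σ.take i ++ r :: σ.drop i
  | 0, σ, _ => rfl
  | i + 1, [], h => by simp at h
  | i + 1, a :: t, h => by
    rw [List.insertIdx_succ_cons, insertIdx_eq r i t (by simpa using h)]
    simp

/-- Inserting into an LR-space increases the number of descents by one. -/
theorem lr_space_des (n : ℕ) (σ : List ℕ) (hσl : σ.length = n) (hσnd : σ.Nodup)
    (r : ℕ) (hr : r ∉ σ) (i : ℕ) (hi : i ≤ n) (hLR : ¬ IsRL σ r i) :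
    des (ins σ i r) = des σ + 1 := by
  subst hσl
  rw [IsRL, not_or, not_or, not_or, not_or] at hLR
  obtain ⟨h1, h2, h3, h4, h5⟩ := hLR
  rcases Nat.eq_zero_or_pos i with hi0 | hipos
  · -- i = 0
    subst hi0
    cases σ with
    | nil => exact absurd ⟨rfl, by simp⟩ h1
    | cons a t =>
      push_neg at h2
      obtain ⟨x, hx, hxr⟩ := h2 rfl
      simp only [List.head?_cons, Option.mem_def, Option.some.injEq] at hx
      subst hx
      have hra : r ≠ a := fun h => hr (h ▸ List.mem_cons_self (a := a) (l := t))
      have hxl : a < r := by omega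
      show des (r :: a :: t) = des (a :: t) + 1
      rw [des_cons_cons, if_pos hxl]
      omega
  rcases Nat.lt_or_ge i σ.length with hilt | hige
  · -- 0 < i < length
    have hins : ins σ i r = σ.take i ++ r :: σ.drop i := insertIdx_eq r i σ (le_of_lt hilt)
    have hσeq : σ = σ.take i ++ σ.drop i := (List.take_append_drop i σ).symm
    obtain ⟨j, rfl⟩ : ∃ j, i = j + 1 := ⟨i - 1, by omega⟩
    have hj : j < σ.length := by omega
    have htake : σ.take (j + 1) = σ.take j ++ [σ[j]] := by
      rw [List.take_succ, List.getElem?_eq_getElem hj]; rfl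
    have hlast : (σ.take (j + 1)).getLast? = some σ[j] := by
      rw [htake, List.getLast?_concat]
    have hhead : (σ.drop (j + 1)).head? = some σ[j+1] := by
      rw [List.head?_drop, List.getElem?_eq_getElem hilt]
    have ha : σ.getD (j + 1 - 1) 0 = σ[j] := by
      simp [List.getD, List.getElem?_eq_getElem hj]
    have hb : σ.getD (j + 1) 0 = σ[j+1] := by
      simp [List.getD, List.getElem?_eq_getElem hilt]
    rw [ha, hb] at h3 h4 h5
    push_neg at h3 h4 h5
    have hab : σ[j] ≠ σ[j+1] := by
      intro h; have := (hσnd.getElem_inj_iff).1 h; omega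
    have hra : r ≠ σ[j] := fun h => hr (h ▸ List.getElem_mem hj)
    have hrb : r ≠ σ[j+1] := fun h => hr (h ▸ List.getElem_mem hilt)
    rw [des_eq_desAux, des_eq_desAux, hins]
    conv_rhs => rw [hσeq]
    rw [desAux_append, desAux_append, desAux_cons, hlast, hhead]
    simp only [List.head?_cons, bdry]
    have h3' := h3 hipos hilt
    have h4' := h4 hipos hilt
    have h5' := h5 hipos hilt
    split_ifs <;> omega
  · -- i = length
    have hieq : i = σ.length := by omega
    subst hieq
    push_neg at h1
    obtain ⟨x, hx, hxr⟩ := h1 rfl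
    have hxmem : x ∈ σ := by
      obtain ⟨h, rfl⟩ := List.mem_getLast?_eq_getLast hx
      exact List.getLast_mem h
    have hrx : r ≠ x := fun h => hr (h ▸ hxmem)
    have hins : ins σ σ.length r = σ ++ [r] := by
      rw [ins, insertIdx_eq r _ _ le_rfl, List.take_length, List.drop_length]
    rw [hins, des_eq_desAux, des_eq_desAux, desAux_append]
    rw [Option.mem_def] at hx
    rw [hx]
    simp only [desAux, bdry, List.head?_cons]
    rw [if_pos (by omega)]
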